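/- Let u, v : ℝ³ → ℝ be smooth functions of (x, y, t) satisfying the Manakov–Santini system: u_{xt} − u_{yy} + (u − v_y) u_{xx} + v_x u_{xy} + u_x² = 0 and v_{xt} − v_{yy} + (u − v_y) v_{xx} + v_x v_{xy} = 0. Then the functions a := v_x and b := u − v_y satisfy the system (MS2): ∂_x(a_t + a a_y + b a_x) = ∂_y(a_y) and ∂_x(b_t + b b_x − a b_y) = ∂_y(b_y − 2 a b_x). -/

import Mathlib

noncomputable section

/-- Partial derivative of `f` along the `i`-th coordinate direction on `ℝⁿ`.
Coordinates on `ℝ³` are `(x, y, t) = (0, 1, 2)`. -/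
def pd {n : ℕ} (i : Fin n) (f : (Fin n → ℝ) → ℝ) : (Fin n → ℝ) → ℝ :=
  fun x => fderiv ℝ f x (Pi.single i 1)

/-- First equation of system (MS2): `(a_t + a a_y + b a_x)_x = (a_y)_y`. -/
def MS2eq1 (a b : (Fin 3 → ℝ) → ℝ) : Prop :=
  ∀ x : Fin 3 → ℝ,
    pd 0 (fun y => pd 2 a y + a y * pd 1 a y + b y * pd 0 a y) x
      = pd 1 (pd 1 a) x

/-- Second equation of system (MS2): `(b_t + b b_x − a b_y)_x = (b_y − 2 a b_x)_y`. -/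
def MS2eq2 (a b : (Fin 3 → ℝ) → ℝ) : Prop :=
  ∀ x : Fin 3 → ℝ,
    pd 0 (fun y => pd 2 b y + b y * pd 0 b y - a y * pd 1 b y) x
      = pd 1 (fun y => pd 1 b y - 2 * a y * pd 0 b y) x

namespace MSaux

variable {n : ℕ} {f g : (Fin n → ℝ) → ℝ}

lemma top_le : ((⊤ : ℕ∞) : WithTop ℕ∞) ≠ 0 := by simp

lemma pd_contDiff (hf : ContDiff ℝ (⊤:ℕ∞) f) (i : Fin n) : ContDiff ℝ (⊤:ℕ∞) (pd i f) := by
  have h := hf.fderiv_right (m := (⊤:ℕ∞)) (by exact_mod_cast le_top)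
  exact (ContinuousLinearMap.apply ℝ ℝ (Pi.single i 1)).contDiff.comp h

lemma dA {x : Fin n → ℝ} (h : ContDiff ℝ (⊤:ℕ∞) f) : DifferentiableAt ℝ f x :=
  (h.differentiable top_le).differentiableAt

lemma pd_add (i : Fin n) {x} (hf : DifferentiableAt ℝ f x) (hg : DifferentiableAt ℝ g x) :
    pd i (fun y => f y + g y) x = pd i f x + pd i g x := by
  simp [pd, fderiv_fun_add hf hg]

lemma pd_sub (i : Fin n) {x} (hf : DifferentiableAt ℝ f x) (hg : DifferentiableAt ℝ g x) :
    pd i (fun y => f y - g y) x = pd i f x - pd i g x := by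
  simp [pd, fderiv_fun_sub hf hg]

lemma pd_mul (i : Fin n) {x} (hf : DifferentiableAt ℝ f x) (hg : DifferentiableAt ℝ g x) :
    pd i (fun y => f y * g y) x = pd i f x * g x + f x * pd i g x := by
  simp [pd, fderiv_fun_mul hf hg]; ring

lemma pd_const_mul (i : Fin n) {x} (c : ℝ) (hf : DifferentiableAt ℝ f x) :
    pd i (fun y => c * f y) x = c * pd i f x := by
  simp [pd, fderiv_const_mul hf]

lemma pd_swap (hf : ContDiff ℝ (⊤:ℕ∞) f) (i j : Fin n) : pd i (pd j f) = pd j (pd i f) := by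
  funext x
  have hdf : Differentiable ℝ f := hf.differentiable top_le
  have hdf' : Differentiable ℝ (fderiv ℝ f) :=
    (hf.fderiv_right (m := (⊤:ℕ∞)) (by exact_mod_cast le_top)).differentiable top_le
  have key : ∀ k l : Fin n, pd k (pd l f) x =
      (fderiv ℝ (fderiv ℝ f) x) (Pi.single k 1) (Pi.single l 1) := by
    intro k l
    have h := ((hdf' x).hasFDerivAt.clm_apply
      (hasFDerivAt_const (Pi.single l 1 : Fin n → ℝ) x)).fderiv
    have hc : pd k (pd l f) x
        = fderiv ℝ (fun y => (fderiv ℝ f y) (Pi.single l 1)) x (Pi.single k 1) := rfl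
    rw [hc, h]
    simp
  rw [key i j, key j i]
  exact second_derivative_symmetric (fun y => (hdf y).hasFDerivAt)
    ((hdf' x).hasFDerivAt) _ _

end MSaux

open MSaux

/-- If `(u, v)` solves the Manakov–Santini system `P(u) + u_x² = 0`, `P(v) = 0`,
where `P = ∂_x∂_t − ∂_y² + (u − v_y)∂_x² + v_x ∂_x∂_y`, then `a := v_x` and
`b := u − v_y` solve system (MS2). -/
theorem manakov_santini_implies_MS2
    (u v : (Fin 3 → ℝ) → ℝ)
    (hu : ContDiff ℝ (⊤ : ℕ∞) u)
    (hv : ContDiff ℝ (⊤ : ℕ∞) v)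
    (hMSu : ∀ x : Fin 3 → ℝ,
      pd 0 (pd 2 u) x - pd 1 (pd 1 u) x + (u x - pd 1 v x) * pd 0 (pd 0 u) x
        + pd 0 v x * pd 0 (pd 1 u) x + (pd 0 u x) ^ 2 = 0)
    (hMSv : ∀ x : Fin 3 → ℝ,
      pd 0 (pd 2 v) x - pd 1 (pd 1 v) x + (u x - pd 1 v x) * pd 0 (pd 0 v) x
        + pd 0 v x * pd 0 (pd 1 v) x = 0) :
    MS2eq1 (pd 0 v) (fun x => u x - pd 1 v x) ∧
    MS2eq2 (pd 0 v) (fun x => u x - pd 1 v x) := by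
  have hv1 : ContDiff ℝ (⊤:ℕ∞) (pd 1 v) := pd_contDiff hv 1
  have hB : ContDiff ℝ (⊤:ℕ∞) (fun y => u y - pd 1 v y) := hu.sub hv1
  -- swap lemmas
  have s1 : pd 1 (pd 0 v) = pd 0 (pd 1 v) := pd_swap hv 1 0
  have s2 : pd 2 (pd 0 v) = pd 0 (pd 2 v) := pd_swap hv 2 0
  have s3 : pd 2 (pd 1 v) = pd 1 (pd 2 v) := pd_swap hv 2 1
  have s4 : pd 1 (pd 0 (pd 1 v)) = pd 0 (pd 1 (pd 1 v)) := pd_swap hv1 1 0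
  have s5 : pd 1 (pd 0 (pd 2 v)) = pd 0 (pd 1 (pd 2 v)) := pd_swap (pd_contDiff hv 2) 1 0
  have s6 : pd 1 (pd 0 (pd 0 v)) = pd 0 (pd 1 (pd 0 v)) := pd_swap (pd_contDiff hv 0) 1 0
  have s8 : pd 1 (pd 0 u) = pd 0 (pd 1 u) := pd_swap hu 1 0
  -- derivatives of b
  have hbd : ∀ i : Fin 3, pd i (fun y => u y - pd 1 v y)
      = fun y => pd i u y - pd i (pd 1 v) y := by
    intro i; funext y; exact pd_sub i (dA hu) (dA hv1)
  have hbdd : ∀ i j : Fin 3, pd i (fun y => pd j u y - pd j (pd 1 v) y)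
      = fun y => pd i (pd j u) y - pd i (pd j (pd 1 v)) y := by
    intro i j; funext y
    exact pd_sub i (dA (pd_contDiff hu j)) (dA (pd_contDiff hv1 j))
  constructor
  · -- first equation
    intro x
    show pd 0 (fun y => pd 2 (pd 0 v) y + pd 0 v y * pd 1 (pd 0 v) y
        + (u y - pd 1 v y) * pd 0 (pd 0 v) y) x = pd 1 (pd 1 (pd 0 v)) x
    have hinner : (fun y => pd 2 (pd 0 v) y + pd 0 v y * pd 1 (pd 0 v) y
        + (u y - pd 1 v y) * pd 0 (pd 0 v) y) = pd 1 (pd 1 v) := by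
      funext y
      rw [s2, s1]
      linarith [hMSv y]
    rw [hinner, pd_swap hv1 0 1, s1]
  · -- second equation
    intro x
    show pd 0 (fun y => pd 2 (fun z => u z - pd 1 v z) y
          + (u y - pd 1 v y) * pd 0 (fun z => u z - pd 1 v z) y
          - pd 0 v y * pd 1 (fun z => u z - pd 1 v z) y) x
        = pd 1 (fun y => pd 1 (fun z => u z - pd 1 v z) y
          - 2 * pd 0 v y * pd 0 (fun z => u z - pd 1 v z) y) x
    have dB : ∀ i : Fin 3, ContDiff ℝ (⊤:ℕ∞) (pd i (fun z => u z - pd 1 v z)) :=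
      fun i => pd_contDiff hB i
    -- expand LHS
    have L1 : pd 0 (fun y => pd 2 (fun z => u z - pd 1 v z) y
          + (u y - pd 1 v y) * pd 0 (fun z => u z - pd 1 v z) y
          - pd 0 v y * pd 1 (fun z => u z - pd 1 v z) y) x
        = pd 0 (fun y => pd 2 (fun z => u z - pd 1 v z) y
            + (u y - pd 1 v y) * pd 0 (fun z => u z - pd 1 v z) y) x
          - pd 0 (fun y => pd 0 v y * pd 1 (fun z => u z - pd 1 v z) y) x :=
      pd_sub 0 (dA ((dB 2).add (hB.mul (dB 0)))) (dA ((pd_contDiff hv 0).mul (dB 1)))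
    have L2 : pd 0 (fun y => pd 2 (fun z => u z - pd 1 v z) y
          + (u y - pd 1 v y) * pd 0 (fun z => u z - pd 1 v z) y) x
        = pd 0 (pd 2 (fun z => u z - pd 1 v z)) x
          + pd 0 (fun y => (u y - pd 1 v y) * pd 0 (fun z => u z - pd 1 v z) y) x :=
      pd_add 0 (dA (dB 2)) (dA (hB.mul (dB 0)))
    have L3 : pd 0 (fun y => (u y - pd 1 v y) * pd 0 (fun z => u z - pd 1 v z) y) x
        = pd 0 (fun y => u y - pd 1 v y) x * pd 0 (fun z => u z - pd 1 v z) x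
          + (u x - pd 1 v x) * pd 0 (pd 0 (fun z => u z - pd 1 v z)) x :=
      pd_mul 0 (dA hB) (dA (dB 0))
    have L4 : pd 0 (fun y => pd 0 v y * pd 1 (fun z => u z - pd 1 v z) y) x
        = pd 0 (pd 0 v) x * pd 1 (fun z => u z - pd 1 v z) x
          + pd 0 v x * pd 0 (pd 1 (fun z => u z - pd 1 v z)) x :=
      pd_mul 0 (dA (pd_contDiff hv 0)) (dA (dB 1))
    -- expand RHS
    have R0 : (fun y => pd 1 (fun z => u z - pd 1 v z) y
          - 2 * pd 0 v y * pd 0 (fun z => u z - pd 1 v z) y)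
        = fun y => pd 1 (fun z => u z - pd 1 v z) y
          - 2 * (pd 0 v y * pd 0 (fun z => u z - pd 1 v z) y) := by
      funext y; ring
    have R1 : pd 1 (fun y => pd 1 (fun z => u z - pd 1 v z) y
          - 2 * (pd 0 v y * pd 0 (fun z => u z - pd 1 v z) y)) x
        = pd 1 (pd 1 (fun z => u z - pd 1 v z)) x
          - pd 1 (fun y => 2 * (pd 0 v y * pd 0 (fun z => u z - pd 1 v z) y)) x :=
      pd_sub 1 (dA (dB 1)) (dA (contDiff_const.mul ((pd_contDiff hv 0).mul (dB 0))))
    have R2 : pd 1 (fun y => 2 * (pd 0 v y * pd 0 (fun z => u z - pd 1 v z) y)) x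
        = 2 * pd 1 (fun y => pd 0 v y * pd 0 (fun z => u z - pd 1 v z) y) x :=
      pd_const_mul 1 2 (dA ((pd_contDiff hv 0).mul (dB 0)))
    have R3 : pd 1 (fun y => pd 0 v y * pd 0 (fun z => u z - pd 1 v z) y) x
        = pd 1 (pd 0 v) x * pd 0 (fun z => u z - pd 1 v z) x
          + pd 0 v x * pd 1 (pd 0 (fun z => u z - pd 1 v z)) x :=
      pd_mul 1 (dA (pd_contDiff hv 0)) (dA (dB 0))
    -- differentiate the v-equation in y
    have key2 : pd 1 (fun y => pd 0 (pd 2 v) y - pd 1 (pd 1 v) y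
          + (u y - pd 1 v y) * pd 0 (pd 0 v) y + pd 0 v y * pd 0 (pd 1 v) y) x = 0 := by
      have hz : (fun y => pd 0 (pd 2 v) y - pd 1 (pd 1 v) y
          + (u y - pd 1 v y) * pd 0 (pd 0 v) y + pd 0 v y * pd 0 (pd 1 v) y)
          = fun _ => (0:ℝ) := funext hMSv
      rw [hz]
      simp [pd]
    have D1 : pd 1 (fun y => pd 0 (pd 2 v) y - pd 1 (pd 1 v) y
          + (u y - pd 1 v y) * pd 0 (pd 0 v) y + pd 0 v y * pd 0 (pd 1 v) y) x
        = pd 1 (fun y => pd 0 (pd 2 v) y - pd 1 (pd 1 v) y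
            + (u y - pd 1 v y) * pd 0 (pd 0 v) y) x
          + pd 1 (fun y => pd 0 v y * pd 0 (pd 1 v) y) x :=
      pd_add 1 (dA (((pd_contDiff (pd_contDiff hv 2) 0).sub (pd_contDiff hv1 1)).add
        (hB.mul (pd_contDiff (pd_contDiff hv 0) 0))))
        (dA ((pd_contDiff hv 0).mul (pd_contDiff hv1 0)))
    have D2 : pd 1 (fun y => pd 0 (pd 2 v) y - pd 1 (pd 1 v) y
          + (u y - pd 1 v y) * pd 0 (pd 0 v) y) x
        = pd 1 (fun y => pd 0 (pd 2 v) y - pd 1 (pd 1 v) y) x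
          + pd 1 (fun y => (u y - pd 1 v y) * pd 0 (pd 0 v) y) x :=
      pd_add 1 (dA ((pd_contDiff (pd_contDiff hv 2) 0).sub (pd_contDiff hv1 1)))
        (dA (hB.mul (pd_contDiff (pd_contDiff hv 0) 0)))
    have D3 : pd 1 (fun y => pd 0 (pd 2 v) y - pd 1 (pd 1 v) y) x
        = pd 1 (pd 0 (pd 2 v)) x - pd 1 (pd 1 (pd 1 v)) x :=
      pd_sub 1 (dA (pd_contDiff (pd_contDiff hv 2) 0)) (dA (pd_contDiff hv1 1))
    have D4 : pd 1 (fun y => (u y - pd 1 v y) * pd 0 (pd 0 v) y) x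
        = pd 1 (fun y => u y - pd 1 v y) x * pd 0 (pd 0 v) x
          + (u x - pd 1 v x) * pd 1 (pd 0 (pd 0 v)) x :=
      pd_mul 1 (dA hB) (dA (pd_contDiff (pd_contDiff hv 0) 0))
    have D5 : pd 1 (fun y => pd 0 v y * pd 0 (pd 1 v) y) x
        = pd 1 (pd 0 v) x * pd 0 (pd 1 v) x + pd 0 v x * pd 1 (pd 0 (pd 1 v)) x :=
      pd_mul 1 (dA (pd_contDiff hv 0)) (dA (pd_contDiff hv1 0))
    rw [D1, D2, D3, D4, D5] at key2
    -- normalize everything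
    rw [L1, L2, L3, L4, R0, R1, R2, R3]
    rw [pd_swap hB 1 0] at *
    simp only [hbdd, hbd] at *
    simp only [s1, s2, s3, s4, s5, s6, s8] at *
    linear_combination hMSu x - key2

end
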